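/- Let K = Q(√139) and I the ideal in Z[√139] with Z-basis {9, 7 − √139} (valid since 9 divides 7^2 − 139 = −90). Let α = 1946/107 + √139 and consider the vectors v1 = (9√(α1), 9√(α2)) and v2 = ((7 − √139)√(α1), (7 + √139)√(α2)), where α1 = 1946/107 + √139 and α2 = 1946/107 − √139. Then α is totally positive, ||v1||^2 = ||v2||^2 = 315252/107, and the cosine of the angle between v1 and v2 equals −1/14; in particular 2|v1·v2| ≤ ||v1||^2, so the lattice spanned by v1, v2 is well-rounded with Minkowski reduced basis v1, v2. -/

import Mathlib

noncomputable section

/-- The planar lattice spanned over ℤ by `v1, v2` in Euclidean plane. -/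
def lat (v1 v2 : EuclideanSpace ℝ (Fin 2)) : Set (EuclideanSpace ℝ (Fin 2)) :=
  {x | ∃ m n : ℤ, x = m • v1 + n • v2}

/-- The `i`-th successive minimum of a set `L` in the Euclidean plane. -/
noncomputable def succMin (L : Set (EuclideanSpace ℝ (Fin 2))) (i : ℕ) : ℝ :=
  sInf {μ : ℝ | 0 ≤ μ ∧ i ≤ Module.finrank ℝ (Submodule.span ℝ {x ∈ L | ‖x‖ ≤ μ})}

private lemma key_int (m n : ℤ) (h : ¬(m = 0 ∧ n = 0)) :
    (14 : ℤ) ≤ 14 * m ^ 2 + 14 * n ^ 2 - 2 * m * n := by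
  rcases eq_or_ne m 0 with rfl | hm
  · have hn : n ≠ 0 := by tauto
    have h1 : 1 ≤ n ^ 2 := by rcases hn.lt_or_gt with h' | h' <;> nlinarith
    nlinarith
  · have h1 : 1 ≤ m ^ 2 := by rcases hm.lt_or_gt with h' | h' <;> nlinarith
    rcases eq_or_ne n 0 with rfl | hn
    · nlinarith
    · have h2 : 1 ≤ n ^ 2 := by rcases hn.lt_or_gt with h' | h' <;> nlinarith
      nlinarith [sq_nonneg (m - n)]

set_option maxHeartbeats 1000000 in
/-- Example: the canonical basis {9, 7 − √139} of an ideal in Z[√139] is WR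
twistable by α = 1946/107 + √139; the twisted basis has equal norms
315252/107, cosine −1/14, and yields a well-rounded lattice with Minkowski
reduced basis. -/
theorem stmt_12 :
    let α1 : ℝ := 1946 / 107 + Real.sqrt 139
    let α2 : ℝ := 1946 / 107 - Real.sqrt 139
    let v1 : EuclideanSpace ℝ (Fin 2) := (WithLp.equiv 2 (Fin 2 → ℝ)).symm
      ![9 * Real.sqrt α1, 9 * Real.sqrt α2]
    let v2 : EuclideanSpace ℝ (Fin 2) := (WithLp.equiv 2 (Fin 2 → ℝ)).symm
      ![(7 - Real.sqrt 139) * Real.sqrt α1, (7 + Real.sqrt 139) * Real.sqrt α2]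
    ((9 : ℤ) ∣ 7 ^ 2 - 139) ∧ 0 < α1 ∧ 0 < α2 ∧
      ‖v1‖ ^ 2 = 315252 / 107 ∧ ‖v2‖ ^ 2 = 315252 / 107 ∧
      (inner ℝ v1 v2 : ℝ) / (‖v1‖ * ‖v2‖) = -(1 / 14) ∧
      2 * |(inner ℝ v1 v2 : ℝ)| ≤ ‖v1‖ ^ 2 ∧
      succMin (lat v1 v2) 1 = succMin (lat v1 v2) 2 := by
  intro α1 α2 v1 v2
  have h139 : Real.sqrt 139 ^ 2 = 139 := Real.sq_sqrt (by norm_num)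
  have h139nn : (0 : ℝ) ≤ Real.sqrt 139 := Real.sqrt_nonneg _
  have hlt : Real.sqrt 139 < 1946 / 107 := by nlinarith
  have hα1 : 0 < α1 := by simp only [α1]; linarith
  have hα2 : 0 < α2 := by simp only [α2]; linarith
  have hsα1 : Real.sqrt α1 ^ 2 = α1 := Real.sq_sqrt hα1.le
  have hsα2 : Real.sqrt α2 ^ 2 = α2 := Real.sq_sqrt hα2.le
  have hα1' : α1 = 1946 / 107 + Real.sqrt 139 := rfl
  have hα2' : α2 = 1946 / 107 - Real.sqrt 139 := rfl
  have hv11 : (inner ℝ v1 v1 : ℝ) = 315252 / 107 := by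
    simp only [v1, PiLp.inner_apply, RCLike.inner_apply, conj_trivial, Fin.sum_univ_two,
      WithLp.equiv_symm_apply, PiLp.toLp_apply, Matrix.cons_val_zero, Matrix.cons_val_one, Matrix.head_cons]
    linear_combination (81 : ℝ) * hsα1 + 81 * hsα2 + 81 * hα1' + 81 * hα2'
  have hv22 : (inner ℝ v2 v2 : ℝ) = 315252 / 107 := by
    simp only [v2, PiLp.inner_apply, RCLike.inner_apply, conj_trivial, Fin.sum_univ_two,
      WithLp.equiv_symm_apply, PiLp.toLp_apply, Matrix.cons_val_zero, Matrix.cons_val_one, Matrix.head_cons]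
    linear_combination ((7 - Real.sqrt 139) ^ 2) * hsα1 + ((7 + Real.sqrt 139) ^ 2) * hsα2 +
      ((7 - Real.sqrt 139) ^ 2) * hα1' + ((7 + Real.sqrt 139) ^ 2) * hα2' + (896 / 107 : ℝ) * h139
  have hv12 : (inner ℝ v1 v2 : ℝ) = -22518 / 107 := by
    simp only [v1, v2, PiLp.inner_apply, RCLike.inner_apply, conj_trivial, Fin.sum_univ_two,
      WithLp.equiv_symm_apply, PiLp.toLp_apply, Matrix.cons_val_zero, Matrix.cons_val_one, Matrix.head_cons]
    linear_combination (9 * (7 - Real.sqrt 139)) * hsα1 + (9 * (7 + Real.sqrt 139)) * hsα2 +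
      (9 * (7 - Real.sqrt 139)) * hα1' + (9 * (7 + Real.sqrt 139)) * hα2' - 18 * h139
  have hn1 : ‖v1‖ ^ 2 = 315252 / 107 := by rw [← real_inner_self_eq_norm_sq]; exact hv11
  have hn2 : ‖v2‖ ^ 2 = 315252 / 107 := by rw [← real_inner_self_eq_norm_sq]; exact hv22
  have hv1norm : ‖v1‖ = Real.sqrt (315252 / 107) := by
    rw [← hn1, Real.sqrt_sq (norm_nonneg _)]
  have hv2norm : ‖v2‖ = Real.sqrt (315252 / 107) := by
    rw [← hn2, Real.sqrt_sq (norm_nonneg _)]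
  have hr2 : Real.sqrt (315252 / 107) ^ 2 = 315252 / 107 := Real.sq_sqrt (by norm_num)
  have hrpos : 0 < Real.sqrt (315252 / 107) := Real.sqrt_pos.2 (by norm_num)
  have hform : ∀ a b : ℝ, ‖a • v1 + b • v2‖ ^ 2
      = (315252 / 107) * (a ^ 2 + b ^ 2) - (45036 / 107) * (a * b) := by
    intro a b
    rw [norm_add_sq_real, real_inner_smul_left, real_inner_smul_right, hv12, norm_smul,
      norm_smul, mul_pow, mul_pow, Real.norm_eq_abs, Real.norm_eq_abs, sq_abs, sq_abs, hn1, hn2]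
    ring
  have hindep : ∀ a b : ℝ, a • v1 + b • v2 = 0 → a = 0 ∧ b = 0 := by
    intro a b hab
    have h0 : (315252 / 107) * (a ^ 2 + b ^ 2) - (45036 / 107) * (a * b) = 0 := by
      rw [← hform, hab]; simp
    have hab2 : a ^ 2 + b ^ 2 = 0 := by
      nlinarith [sq_nonneg (a - b), sq_nonneg (a + b), sq_nonneg a, sq_nonneg b]
    constructor
    · have : a ^ 2 = 0 := by nlinarith [sq_nonneg a, sq_nonneg b]
      exact pow_eq_zero_iff two_ne_zero |>.mp this
    · have : b ^ 2 = 0 := by nlinarith [sq_nonneg a, sq_nonneg b]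
      exact pow_eq_zero_iff two_ne_zero |>.mp this
  have hlatlb : ∀ x ∈ lat v1 v2, x ≠ 0 → Real.sqrt (315252 / 107) ≤ ‖x‖ := by
    rintro x ⟨m, n, rfl⟩ hx
    have hc1 : (m : ℤ) • v1 = (m : ℝ) • v1 := (Int.cast_smul_eq_zsmul ℝ m v1).symm
    have hc2 : (n : ℤ) • v2 = (n : ℝ) • v2 := (Int.cast_smul_eq_zsmul ℝ n v2).symm
    have hne : ¬(m = 0 ∧ n = 0) := by
      rintro ⟨rfl, rfl⟩
      simp at hx
    have hkey := key_int m n hne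
    have hkeyR : (14 : ℝ) ≤ 14 * (m : ℝ) ^ 2 + 14 * (n : ℝ) ^ 2 - 2 * (m : ℝ) * (n : ℝ) := by
      exact_mod_cast hkey
    have h1 : (315252 / 107 : ℝ) ≤ ‖(m : ℝ) • v1 + (n : ℝ) • v2‖ ^ 2 := by
      rw [hform]; linarith
    rw [hc1, hc2]
    calc Real.sqrt (315252 / 107) ≤ Real.sqrt (‖(m : ℝ) • v1 + (n : ℝ) • v2‖ ^ 2) :=
          Real.sqrt_le_sqrt h1
      _ = ‖(m : ℝ) • v1 + (n : ℝ) • v2‖ := Real.sqrt_sq (norm_nonneg _)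
  have hset : ∀ i : ℕ, 1 ≤ i → i ≤ 2 →
      {μ : ℝ | 0 ≤ μ ∧ i ≤ Module.finrank ℝ
        (Submodule.span ℝ {x ∈ lat v1 v2 | ‖x‖ ≤ μ})} = Set.Ici (Real.sqrt (315252 / 107)) := by
    intro i hi1 hi2
    ext μ
    constructor
    · rintro ⟨hμ0, hi⟩
      by_contra hcon
      have hμr : μ < Real.sqrt (315252 / 107) := lt_of_not_ge hcon
      have hsub : {x ∈ lat v1 v2 | ‖x‖ ≤ μ} ⊆ ({0} : Set (EuclideanSpace ℝ (Fin 2))) := by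
        rintro x ⟨hxl, hxn⟩
        by_contra hx0
        have := hlatlb x hxl hx0
        simp only [Set.mem_singleton_iff] at hx0
        linarith [hlatlb x hxl hx0]
      have hle : Submodule.span ℝ {x ∈ lat v1 v2 | ‖x‖ ≤ μ} ≤ ⊥ := by
        rw [← Submodule.span_zero_singleton (R := ℝ) (M := EuclideanSpace ℝ (Fin 2))]
        exact Submodule.span_mono hsub
      rw [le_bot_iff.mp hle, finrank_bot] at hi
      omega
    · intro hrμ
      have hrμ' : Real.sqrt (315252 / 107) ≤ μ := hrμ
      refine ⟨le_trans hrpos.le hrμ', ?_⟩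
      have hv1mem : v1 ∈ {x ∈ lat v1 v2 | ‖x‖ ≤ μ} := by
        refine ⟨⟨1, 0, by simp⟩, ?_⟩
        rw [hv1norm]; exact hrμ'
      have hv2mem : v2 ∈ {x ∈ lat v1 v2 | ‖x‖ ≤ μ} := by
        refine ⟨⟨0, 1, by simp⟩, ?_⟩
        rw [hv2norm]; exact hrμ'
      have hli : LinearIndependent ℝ ![v1, v2] := by
        rw [LinearIndependent.pair_iff]
        exact fun s t h => hindep s t h
      have htop : Submodule.span ℝ (Set.range ![v1, v2]) = ⊤ :=
        hli.span_eq_top_of_card_eq_finrank (by simp [finrank_euclideanSpace_fin])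
      have hrange : Set.range ![v1, v2] = {v1, v2} := by
        simp [Matrix.range_cons, Matrix.range_empty, Set.pair_comm]
      have hsub2 : ({v1, v2} : Set (EuclideanSpace ℝ (Fin 2))) ⊆
          {x ∈ lat v1 v2 | ‖x‖ ≤ μ} := by
        rintro x (rfl | rfl)
        · exact hv1mem
        · exact hv2mem
      have hspan : Submodule.span ℝ {x ∈ lat v1 v2 | ‖x‖ ≤ μ} = ⊤ := by
        apply top_unique
        rw [← htop, hrange]
        exact Submodule.span_mono hsub2
      rw [hspan, finrank_top, finrank_euclideanSpace_fin]
      omega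
  refine ⟨⟨-10, by norm_num⟩, hα1, hα2, hn1, hn2, ?_, ?_, ?_⟩
  · rw [hv12, hv1norm, hv2norm, Real.mul_self_sqrt (by norm_num)]
    norm_num
  · rw [hv12, hn1]
    rw [show |(-22518 / 107 : ℝ)| = 22518 / 107 by rw [abs_of_neg (by norm_num)]; norm_num]
    norm_num
  · rw [succMin, succMin, hset 1 (by norm_num) (by norm_num), hset 2 (by norm_num) (by norm_num)]
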